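/- For every real number x, ∑_{k=0}^∞ a_k · x^{2k+1}/(2k+1)! = x · ∫₀¹ g(x²·t·(1−t))³ dt; equivalently, the moment generating function ∑_k a_k x^{2k}/(2k)! of the random eigenvalue H of graphene equals d/dx [ x ∫₀¹ I₀³(2x√(t(1−t))) dt ]. -/

import Mathlib

open MeasureTheory Real

/-- `a k` is the sum of squared multinomial coefficients over all triples
`(k₁,k₂,k₃)` of natural numbers with `k₁+k₂+k₃ = k`. -/
def a (k : ℕ) : ℕ :=
  ∑ p ∈ Finset.Nat.antidiagonalTuple 3 k, (Nat.multinomial Finset.univ p) ^ 2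

/-- The entire function `g(y) = ∑ y^k/(k!)²`, so that `g(x²t(1−t))³ = I₀³(2x√(t(1−t)))`
for `t ∈ [0,1]`. -/
noncomputable def g (y : ℝ) : ℝ := ∑' k : ℕ, y ^ k / ((Nat.factorial k : ℝ)) ^ 2

lemma summable_aux (y : ℝ) : Summable (fun k : ℕ => y ^ k / ((Nat.factorial k : ℝ)) ^ 2) := by
  refine Summable.of_norm_bounded (Real.summable_pow_div_factorial |y|) fun k => ?_
  have h1 : (1:ℝ) ≤ (Nat.factorial k : ℝ) := by exact_mod_cast Nat.one_le_iff_ne_zero.mpr (Nat.factorial_ne_zero k)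
  have h2 : (Nat.factorial k : ℝ) ≤ (Nat.factorial k : ℝ) ^ 2 := by nlinarith
  rw [norm_div, norm_pow, Real.norm_eq_abs]
  rw [show ‖((Nat.factorial k : ℝ)) ^ 2‖ = ((Nat.factorial k : ℝ)) ^ 2 by
    rw [Real.norm_eq_abs]; exact abs_of_nonneg (by positivity)]
  exact div_le_div_of_nonneg_left (by positivity) (by positivity) h2
  |>.trans_eq' (by rfl)

lemma hasSum_g (y : ℝ) : HasSum (fun k : ℕ => y ^ k / ((Nat.factorial k : ℝ)) ^ 2) (g y) := by
  simpa [g] using (summable_aux y).hasSum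

set_option maxHeartbeats 1000000 in
lemma hasSum_cube (y : ℝ) (hy : 0 ≤ y) :
    HasSum (fun k : ℕ => (a k : ℝ) * y ^ k / ((Nat.factorial k : ℝ)) ^ 2) (g y ^ 3) := by
  set f : ℕ → ℝ := fun k => y ^ k / ((Nat.factorial k : ℝ)) ^ 2 with hf_def
  have hf : Summable f := summable_aux y
  have hfs : HasSum f (g y) := hasSum_g y
  have hnn : ∀ k, 0 ≤ f k := fun k => by
    simp only [hf_def]; positivity
  have s2 : Summable (fun q : ℕ × ℕ => f q.1 * f q.2) :=
    hf.mul_of_nonneg hf hnn hnn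
  have h2 : HasSum (fun q : ℕ × ℕ => f q.1 * f q.2) (g y * g y) := hfs.mul hfs s2
  have s3 : Summable (fun q : ℕ × (ℕ × ℕ) => f q.1 * (f q.2.1 * f q.2.2)) :=
    hf.mul_of_nonneg s2 hnn (fun q => mul_nonneg (hnn _) (hnn _))
  have h3 : HasSum (fun q : ℕ × ℕ × ℕ => f q.1 * (f q.2.1 * f q.2.2)) (g y * (g y * g y)) :=
    hfs.mul h2 s3
  let e : (Fin 3 → ℕ) ≃ ℕ × ℕ × ℕ :=
    ⟨fun p => (p 0, p 1, p 2), fun q => ![q.1, q.2.1, q.2.2],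
      fun p => by funext i; fin_cases i <;> rfl, fun q => rfl⟩
  have h4 : HasSum (fun p : Fin 3 → ℕ => f (p 0) * (f (p 1) * f (p 2))) (g y * (g y * g y)) :=
    (Equiv.hasSum_iff e).mpr h3
  have h5 := ((Finset.Nat.sigmaAntidiagonalTupleEquivTuple 3).hasSum_iff).mpr h4
  have h6 : HasSum (fun n : ℕ =>
      ∑ p ∈ Finset.Nat.antidiagonalTuple 3 n, (f (p 0) * (f (p 1) * f (p 2))))
      (g y * (g y * g y)) :=
    h5.sigma fun n => (Finset.Nat.antidiagonalTuple 3 n).hasSum _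
  have key : ∀ n : ℕ, ∑ p ∈ Finset.Nat.antidiagonalTuple 3 n, (f (p 0) * (f (p 1) * f (p 2)))
      = (a n : ℝ) * y ^ n / ((Nat.factorial n : ℝ)) ^ 2 := by
    intro n
    have step : ∀ p ∈ Finset.Nat.antidiagonalTuple 3 n,
        f (p 0) * (f (p 1) * f (p 2))
          = ((Nat.multinomial Finset.univ p : ℕ) : ℝ) ^ 2 * y ^ n / ((Nat.factorial n : ℝ)) ^ 2 := by
      intro p hp
      have hsum : p 0 + p 1 + p 2 = n := by
        have := Finset.Nat.mem_antidiagonalTuple.mp hp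
        simpa [Fin.sum_univ_three] using this
      have hspec := Nat.multinomial_spec Finset.univ p
      rw [Fin.prod_univ_three, Fin.sum_univ_three, hsum] at hspec
      -- hspec : (p 0)! * (p 1)! * (p 2)! * multinomial = n !
      have hcast : ((Nat.factorial (p 0) : ℝ) * (Nat.factorial (p 1)) * (Nat.factorial (p 2)))
          * ((Nat.multinomial Finset.univ p : ℕ) : ℝ) = (Nat.factorial n : ℝ) := by
        exact_mod_cast congrArg (Nat.cast : ℕ → ℝ) hspec
      have h1 : f (p 0) * (f (p 1) * f (p 2))
          = y ^ n / ((Nat.factorial (p 0) : ℝ) * (Nat.factorial (p 1)) * (Nat.factorial (p 2))) ^ 2 := by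
        simp only [hf_def]
        rw [← hsum, pow_add, pow_add]
        ring
      rw [h1, ← hcast]
      have h0 : ((Nat.factorial (p 0) : ℝ)) ≠ 0 := Nat.cast_ne_zero.mpr (Nat.factorial_ne_zero _)
      have h1' : ((Nat.factorial (p 1) : ℝ)) ≠ 0 := Nat.cast_ne_zero.mpr (Nat.factorial_ne_zero _)
      have h2' : ((Nat.factorial (p 2) : ℝ)) ≠ 0 := Nat.cast_ne_zero.mpr (Nat.factorial_ne_zero _)
      have hm : ((Nat.multinomial Finset.univ p : ℕ) : ℝ) ≠ 0 :=
        Nat.cast_ne_zero.mpr (Nat.multinomial_pos _ _).ne'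
      field_simp
    rw [Finset.sum_congr rfl step]
    simp only [a, Nat.cast_sum, Nat.cast_pow]
    rw [← Finset.sum_div, ← Finset.sum_mul]
  simp only [key] at h6
  have h7 : g y ^ 3 = g y * (g y * g y) := by ring
  rw [h7]
  exact h6

lemma beta_nat (k : ℕ) :
    ∫ t in (0:ℝ)..1, t ^ k * (1 - t) ^ k
      = ((Nat.factorial k : ℝ) * Nat.factorial k) / (Nat.factorial (2 * k + 1) : ℝ) := by
  have hre : 0 < Complex.re ((k : ℂ) + 1) := by
    simp
    positivity
  have h := Complex.Gamma_mul_Gamma_eq_betaIntegral hre hre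
  have hG : Complex.Gamma ((k : ℂ) + 1) = (Nat.factorial k : ℂ) :=
    Complex.Gamma_nat_eq_factorial k
  have hG2 : Complex.Gamma (((k : ℂ) + 1) + ((k : ℂ) + 1)) = (Nat.factorial (2 * k + 1) : ℂ) := by
    have h' : ((k : ℂ) + 1) + ((k : ℂ) + 1) = ((2 * k + 1 : ℕ) : ℂ) + 1 := by push_cast; ring
    rw [h', Complex.Gamma_nat_eq_factorial]
  have hbeta : Complex.betaIntegral ((k : ℂ) + 1) ((k : ℂ) + 1)
      = ((∫ t in (0:ℝ)..1, t ^ k * (1 - t) ^ k : ℝ) : ℂ) := by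
    rw [Complex.betaIntegral, ← intervalIntegral.integral_ofReal]
    refine intervalIntegral.integral_congr fun t ht => ?_
    rw [add_sub_cancel_right, Complex.cpow_natCast, Complex.cpow_natCast]
    push_cast
    ring
  rw [hG, hG2, hbeta] at h
  have h2k : ((Nat.factorial (2 * k + 1) : ℂ)) ≠ 0 :=
    Nat.cast_ne_zero.mpr (Nat.factorial_ne_zero _)
  have : ((∫ t in (0:ℝ)..1, t ^ k * (1 - t) ^ k : ℝ) : ℂ)
      = ((Nat.factorial k : ℂ) * Nat.factorial k) / (Nat.factorial (2 * k + 1) : ℂ) := by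
    rw [eq_div_iff h2k]
    linear_combination -h
  have hr := congrArg Complex.re this
  simp only [Complex.div_re, Complex.normSq] at hr
  simp at hr
  rw [hr]
  have h2kR : ((Nat.factorial (2 * k + 1) : ℝ)) ≠ 0 :=
    Nat.cast_ne_zero.mpr (Nat.factorial_ne_zero _)
  field_simp

lemma four_pow_mul_sq_factorial_le (k : ℕ) :
    4 ^ k * (Nat.factorial k * Nat.factorial k) ≤ Nat.factorial (2 * k + 1) := by
  induction k with
  | zero => simp
  | succ n ih =>
    have h2 : 2 * (n + 1) + 1 = (2 * n + 1) + 1 + 1 := by ring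
    rw [h2, Nat.factorial_succ, Nat.factorial_succ, Nat.factorial_succ]
    calc 4 ^ (n + 1) * ((n + 1) * Nat.factorial n * ((n + 1) * Nat.factorial n))
        = ((2 * (n + 1)) * (2 * (n + 1))) * (4 ^ n * (Nat.factorial n * Nat.factorial n)) := by ring
      _ ≤ ((2 * n + 1 + 1 + 1) * (2 * n + 1 + 1)) * Nat.factorial (2 * n + 1) := by
          refine Nat.mul_le_mul ?_ ih
          nlinarith
      _ = (2 * n + 1 + 1 + 1) * ((2 * n + 1 + 1) * Nat.factorial (2 * n + 1)) := by ring

/-- `∑_{k≥0} a_k x^{2k+1}/(2k+1)! = x ∫₀¹ I₀³(2x√(t(1−t))) dt`. -/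
theorem sum_a_odd_egf_eq_integral (x : ℝ) :
    HasSum (fun k : ℕ => (a k : ℝ) * x ^ (2 * k + 1) / (Nat.factorial (2 * k + 1) : ℝ))
      (x * ∫ t in (0:ℝ)..1, g (x ^ 2 * t * (1 - t)) ^ 3) := by
  set μ : Measure ℝ := volume.restrict (Set.Ioc (0:ℝ) 1) with hμ
  set F : ℕ → ℝ → ℝ :=
    fun k t => (a k : ℝ) * (x ^ 2 * t * (1 - t)) ^ k / ((Nat.factorial k : ℝ)) ^ 2 with hF
  have hFc : ∀ k, Continuous (F k) := by
    intro k
    simp only [hF]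
    fun_prop
  have hFint : ∀ k, Integrable (F k) μ := fun k => (hFc k).integrableOn_Ioc
  have hfac_ne : ∀ m : ℕ, ((Nat.factorial m : ℝ)) ≠ 0 :=
    fun m => Nat.cast_ne_zero.mpr (Nat.factorial_ne_zero m)
  have hIval : ∀ k, ∫ t, F k t ∂μ = (a k : ℝ) * x ^ (2 * k) / (Nat.factorial (2 * k + 1) : ℝ) := by
    intro k
    have h1 : ∫ t, F k t ∂μ = ∫ t in (0:ℝ)..1, F k t := by
      rw [intervalIntegral.integral_of_le zero_le_one]
    rw [h1]
    have h2 : ∀ t : ℝ, F k t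
        = ((a k : ℝ) * (x ^ 2) ^ k / ((Nat.factorial k : ℝ)) ^ 2) * (t ^ k * (1 - t) ^ k) := by
      intro t; simp only [hF, mul_pow]; ring
    simp only [h2]
    rw [intervalIntegral.integral_const_mul, beta_nat k]
    rw [← pow_mul]
    field_simp
  have hFnonneg : ∀ k, ∀ t ∈ Set.Ioc (0:ℝ) 1, 0 ≤ F k t := by
    intro k t ht
    have hy : 0 ≤ x ^ 2 * t * (1 - t) :=
      mul_nonneg (mul_nonneg (sq_nonneg x) ht.1.le) (by linarith [ht.2])
    simp only [hF]
    positivity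
  have hnorm : ∀ k, ∫ t, ‖F k t‖ ∂μ = (a k : ℝ) * x ^ (2 * k) / (Nat.factorial (2 * k + 1) : ℝ) := by
    intro k
    rw [← hIval k]
    refine integral_congr_ae ?_
    filter_upwards [ae_restrict_mem measurableSet_Ioc] with t ht
    exact Real.norm_of_nonneg (hFnonneg k t ht)
  have hsummable : Summable (fun k => ∫ t, ‖F k t‖ ∂μ) := by
    simp only [hnorm]
    refine Summable.of_nonneg_of_le (fun k => by rw [pow_mul]; positivity) (fun k => ?_)
      ((hasSum_cube (x ^ 2 / 4) (by positivity)).summable)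
    have hle : (4 : ℝ) ^ k * ((Nat.factorial k : ℝ)) ^ 2 ≤ (Nat.factorial (2 * k + 1) : ℝ) := by
      have := four_pow_mul_sq_factorial_le k
      calc (4 : ℝ) ^ k * ((Nat.factorial k : ℝ)) ^ 2
          = ((4 ^ k * (Nat.factorial k * Nat.factorial k) : ℕ) : ℝ) := by push_cast; ring
        _ ≤ _ := by exact_mod_cast this
    have h4 : (0:ℝ) < 4 ^ k * ((Nat.factorial k : ℝ)) ^ 2 := by positivity
    have hx2 : (0:ℝ) ≤ (a k : ℝ) * (x ^ 2) ^ k := by positivity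
    calc (a k : ℝ) * x ^ (2 * k) / (Nat.factorial (2 * k + 1) : ℝ)
        = ((a k : ℝ) * (x ^ 2) ^ k) / (Nat.factorial (2 * k + 1) : ℝ) := by rw [pow_mul]
      _ ≤ ((a k : ℝ) * (x ^ 2) ^ k) / (4 ^ k * ((Nat.factorial k : ℝ)) ^ 2) :=
          div_le_div_of_nonneg_left hx2 h4 hle
      _ = (a k : ℝ) * (x ^ 2 / 4) ^ k / ((Nat.factorial k : ℝ)) ^ 2 := by
          rw [div_pow]
          field_simp
  have hHasSum := hasSum_integral_of_summable_integral_norm hFint hsummable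
  have hinteq : ∫ t, (∑' k, F k t) ∂μ = ∫ t in (0:ℝ)..1, g (x ^ 2 * t * (1 - t)) ^ 3 := by
    rw [intervalIntegral.integral_of_le zero_le_one]
    refine setIntegral_congr_fun measurableSet_Ioc fun t ht => ?_
    have hy : 0 ≤ x ^ 2 * t * (1 - t) :=
      mul_nonneg (mul_nonneg (sq_nonneg x) ht.1.le) (by linarith [ht.2])
    exact (hasSum_cube _ hy).tsum_eq
  rw [hinteq] at hHasSum
  have hfin := hHasSum.mul_left x
  simp only [hIval] at hfin
  have hfun : (fun k : ℕ => (a k : ℝ) * x ^ (2 * k + 1) / (Nat.factorial (2 * k + 1) : ℝ))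
      = fun k => x * ((a k : ℝ) * x ^ (2 * k) / (Nat.factorial (2 * k + 1) : ℝ)) := by
    funext k
    rw [pow_succ]
    ring
  rw [hfun]
  exact hfin
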